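/- Let P ∈ ℝ^{n×r}, Q ∈ ℝ^{ℓ×n}, R ∈ ℝ^{ℓ×r} satisfy im R ⊆ im Q and ker P ⊆ ker R (so that 𝒜 := { A ∈ ℝ^{n×n} : R = Q A P } is nonempty), and let C ∈ ℝ^{p×n}. Then rank [[A − λI],[C]] = n for all A ∈ 𝒜 and all λ ∈ ℂ (i.e., by the Hautus test, the pair (C,A) is observable for all A ∈ 𝒜) if and only if ker C ⊆ im P and rank [[R − λQP],[CP]] = rank P for all λ ∈ ℂ. Similarly, rank [[A − λI],[C]] = n for all A ∈ 𝒜 and all λ ∈ ℂ with |λ| ≥ 1 (i.e., (C,A) is detectable for all A ∈ 𝒜) if and only if ker C ⊆ im P and rank [[R − λQP],[CP]] = rank P for all λ ∈ ℂ with |λ| ≥ 1. -/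

import Mathlib

open Matrix Module

/-- Complexification of a real matrix. -/
noncomputable def cx {a b : ℕ} (M : Matrix (Fin a) (Fin b) ℝ) : Matrix (Fin a) (Fin b) ℂ :=
  M.map (algebraMap ℝ ℂ)

namespace UniformHautus

/-- Complexification of a real vector. -/
noncomputable def cxv {b : ℕ} (v : Fin b → ℝ) : Fin b → ℂ := fun i => (v i : ℂ)

/-- Real part of a complex vector. -/
def reV {b : ℕ} (w : Fin b → ℂ) : Fin b → ℝ := fun i => (w i).re

/-- Imaginary part of a complex vector. -/
def imV {b : ℕ} (w : Fin b → ℂ) : Fin b → ℝ := fun i => (w i).im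

lemma cx_mul {a b c : ℕ} (M : Matrix (Fin a) (Fin b) ℝ) (N : Matrix (Fin b) (Fin c) ℝ) :
    cx (M * N) = cx M * cx N := Matrix.map_mul

lemma cx_add {a b : ℕ} (M N : Matrix (Fin a) (Fin b) ℝ) :
    cx (M + N) = cx M + cx N := Matrix.map_add _ (map_add _) _ _

lemma cx_mulVec {a b : ℕ} (M : Matrix (Fin a) (Fin b) ℝ) (v : Fin b → ℝ) :
    cx M *ᵥ cxv v = cxv (M *ᵥ v) := by
  funext i
  exact (RingHom.map_mulVec (algebraMap ℝ ℂ) M v i).symm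

lemma cxv_eq_zero {b : ℕ} {v : Fin b → ℝ} : cxv v = 0 ↔ v = 0 := by
  constructor
  · intro h; funext i; have := congrFun h i; simpa [cxv] using this
  · rintro rfl; funext i; simp [cxv]

lemma cxv_smul {b : ℕ} (t : ℝ) (v : Fin b → ℝ) : cxv (t • v) = (t : ℂ) • cxv v := by
  funext i; simp [cxv]

lemma cxv_add {b : ℕ} (u v : Fin b → ℝ) : cxv (u + v) = cxv u + cxv v := by
  funext i; simp [cxv]

lemma cxv_sub {b : ℕ} (u v : Fin b → ℝ) : cxv (u - v) = cxv u - cxv v := by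
  funext i; simp [cxv]

lemma cxv_inj {b : ℕ} {u v : Fin b → ℝ} (h : cxv u = cxv v) : u = v := by
  funext i; have := congrFun h i; simpa [cxv] using this

lemma reV_mulVec {a b : ℕ} (M : Matrix (Fin a) (Fin b) ℝ) (w : Fin b → ℂ) :
    reV (cx M *ᵥ w) = M *ᵥ reV w := by
  funext i
  simp [Matrix.mulVec, dotProduct, cx, reV, Complex.re_sum, Complex.mul_re]

lemma imV_mulVec {a b : ℕ} (M : Matrix (Fin a) (Fin b) ℝ) (w : Fin b → ℂ) :
    imV (cx M *ᵥ w) = M *ᵥ imV w := by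
  funext i
  simp [Matrix.mulVec, dotProduct, cx, imV, Complex.im_sum, Complex.mul_im]

lemma decomp {b : ℕ} (w : Fin b → ℂ) : w = cxv (reV w) + Complex.I • cxv (imV w) := by
  funext i
  simp [cxv, reV, imV, Complex.ext_iff, mul_comm]

lemma cx_mulVec_eq_zero {a b : ℕ} {M : Matrix (Fin a) (Fin b) ℝ} {w : Fin b → ℂ} :
    cx M *ᵥ w = 0 ↔ M *ᵥ reV w = 0 ∧ M *ᵥ imV w = 0 := by
  constructor
  · intro h
    refine ⟨?_, ?_⟩
    · rw [← reV_mulVec, h]; funext i; simp [reV]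
    · rw [← imV_mulVec, h]; funext i; simp [imV]
  · rintro ⟨h1, h2⟩
    rw [decomp (cx M *ᵥ w), reV_mulVec, imV_mulVec, h1, h2]
    simp [cxv_eq_zero.2 rfl]


lemma cxv_apply {b : ℕ} (v : Fin b → ℝ) (i : Fin b) : cxv v i = (v i : ℂ) := rfl

lemma cxv_neg {b : ℕ} (v : Fin b → ℝ) : cxv (-v) = -cxv v := by
  funext i; simp [cxv]

lemma reV_zero {b : ℕ} : reV (0 : Fin b → ℂ) = 0 := by funext i; simp [reV]

lemma imV_zero {b : ℕ} : imV (0 : Fin b → ℂ) = 0 := by funext i; simp [imV]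

/-- Kernel dimension is preserved by complexification. -/
lemma finrank_ker_cx {a b : ℕ} (M : Matrix (Fin a) (Fin b) ℝ) :
    finrank ℂ (LinearMap.ker (cx M).mulVecLin) = finrank ℝ (LinearMap.ker M.mulVecLin) := by
  classical
  set K := LinearMap.ker M.mulVecLin with hK
  set k := finrank ℝ K with hk
  let β : Basis (Fin k) ℝ K := Module.finBasis ℝ K
  let v : Fin k → (Fin b → ℝ) := fun i => (β i : Fin b → ℝ)
  have hvind : LinearIndependent ℝ v := β.linearIndependent.map' K.subtype (Submodule.ker_subtype K)
  have hvmem : ∀ i, M *ᵥ v i = 0 := fun i => (β i).2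
  let w : Fin k → (Fin b → ℂ) := fun i => cxv (v i)
  have hwind : LinearIndependent ℂ w := by
    rw [Fintype.linearIndependent_iff]
    intro g hg i
    have hre : ∑ j, (g j).re • v j = 0 := by
      funext t
      have := congrFun hg t
      simp only [Finset.sum_apply, Pi.smul_apply, Pi.zero_apply, smul_eq_mul, w, cxv] at this ⊢
      have := congrArg Complex.re this
      simpa [Complex.re_sum, Complex.mul_re] using this
    have him : ∑ j, (g j).im • v j = 0 := by
      funext t
      have := congrFun hg t
      simp only [Finset.sum_apply, Pi.smul_apply, Pi.zero_apply, smul_eq_mul, w, cxv] at this ⊢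
      have := congrArg Complex.im this
      simpa [Complex.im_sum, Complex.mul_im] using this
    have h1 := Fintype.linearIndependent_iff.1 hvind _ hre i
    have h2 := Fintype.linearIndependent_iff.1 hvind _ him i
    exact Complex.ext h1 h2
  have hcxv_span : ∀ x : Fin b → ℝ, M *ᵥ x = 0 → cxv x ∈ Submodule.span ℂ (Set.range w) := by
    intro x hx
    have hrepr := β.sum_repr ⟨x, hx⟩
    have hxeq : ∀ t, x t = ∑ j, (β.repr ⟨x, hx⟩) j • v j t := by
      intro t
      have h := congrFun (congrArg (Subtype.val) hrepr) t
      simp only [AddSubmonoidClass.coe_finset_sum, Finset.sum_apply, SetLike.val_smul,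
        Pi.smul_apply] at h
      rw [← h]
    have : cxv x = ∑ j, ((β.repr ⟨x, hx⟩) j : ℂ) • w j := by
      funext t
      simp only [Finset.sum_apply, Pi.smul_apply, smul_eq_mul, w, cxv, hxeq t]
      push_cast
      rfl
    rw [this]
    exact Submodule.sum_mem _ fun j _ => Submodule.smul_mem _ _ (Submodule.subset_span ⟨j, rfl⟩)
  have hspan : LinearMap.ker (cx M).mulVecLin = Submodule.span ℂ (Set.range w) := by
    apply le_antisymm
    · intro u hu
      rw [LinearMap.mem_ker, Matrix.mulVecLin_apply] at hu
      obtain ⟨h1, h2⟩ := cx_mulVec_eq_zero.1 hu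
      rw [decomp u]
      exact Submodule.add_mem _ (hcxv_span _ h1) (Submodule.smul_mem _ _ (hcxv_span _ h2))
    · rw [Submodule.span_le]
      rintro _ ⟨i, rfl⟩
      simp only [SetLike.mem_coe, LinearMap.mem_ker, Matrix.mulVecLin_apply, w]
      rw [cx_mulVec, hvmem i, cxv_eq_zero.2 rfl]
  rw [hspan, finrank_span_eq_card hwind, Fintype.card_fin]

/-- Rank-nullity for matrices over a field. -/
lemma rank_add_finrank_ker {K : Type*} [Field K] {m : Type*} [Fintype m] {b : ℕ}
    (M : Matrix m (Fin b) K) :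
    M.rank + finrank K (LinearMap.ker M.mulVecLin) = b := by
  simpa [Matrix.rank] using LinearMap.finrank_range_add_finrank_ker M.mulVecLin

/-- Rank is preserved by complexification. -/
lemma rank_cx {a b : ℕ} (M : Matrix (Fin a) (Fin b) ℝ) : (cx M).rank = M.rank := by
  have h1 := rank_add_finrank_ker (cx M)
  have h2 := rank_add_finrank_ker M
  have := finrank_ker_cx M
  omega

lemma mulVecLin_inj {a b : ℕ} {M N : Matrix (Fin a) (Fin b) ℝ}
    (h : M.mulVecLin = N.mulVecLin) : M = N := by
  apply Matrix.toLin'.injective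
  rw [Matrix.toLin'_apply', Matrix.toLin'_apply', h]

lemma exists_functional {b : ℕ} (U : Submodule ℝ (Fin b → ℝ)) {x : Fin b → ℝ} (hx : x ∉ U) :
    ∃ f : (Fin b → ℝ) →ₗ[ℝ] ℝ, f x = 1 ∧ ∀ u ∈ U, f u = 0 := by
  obtain ⟨f, hfx, hfU⟩ := U.exists_dual_map_eq_bot_of_notMem hx inferInstance
  refine ⟨(f x)⁻¹ • f, by simp [inv_mul_cancel₀ hfx], fun u hu => ?_⟩
  have : f u ∈ U.map f := ⟨u, hu, rfl⟩
  rw [hfU] at this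
  simp only [Submodule.mem_bot] at this
  simp [this]

/-- The affine set is nonempty. -/
lemma exists_A0 {n r l : ℕ} (P : Matrix (Fin n) (Fin r) ℝ) (Q : Matrix (Fin l) (Fin n) ℝ)
    (R : Matrix (Fin l) (Fin r) ℝ)
    (him : LinearMap.range R.mulVecLin ≤ LinearMap.range Q.mulVecLin)
    (hker : LinearMap.ker P.mulVecLin ≤ LinearMap.ker R.mulVecLin) :
    ∃ A₀ : Matrix (Fin n) (Fin n) ℝ, R = Q * A₀ * P := by
  classical
  set P' := P.mulVecLin
  set Q' := Q.mulVecLin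
  set R' := R.mulVecLin
  obtain ⟨W, hW⟩ := (LinearMap.range P').exists_isCompl
  let π := (LinearMap.range P').linearProjOfIsCompl W hW
  let e := P'.quotKerEquivRange
  let L : (Fin n → ℝ) →ₗ[ℝ] (Fin l → ℝ) :=
    ((LinearMap.ker P').liftQ R' hker) ∘ₗ (e.symm : _ →ₗ[ℝ] _) ∘ₗ π
  have hLP : ∀ v, L (P' v) = R' v := by
    intro v
    have h1 : π (P' v) = ⟨P' v, LinearMap.mem_range_self _ v⟩ :=
      Submodule.linearProjOfIsCompl_apply_left hW ⟨P' v, LinearMap.mem_range_self _ v⟩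
    have h2 : e (Submodule.Quotient.mk v) = ⟨P' v, LinearMap.mem_range_self _ v⟩ :=
      Subtype.ext (P'.quotKerEquivRange_apply_mk v)
    simp only [L, LinearMap.comp_apply, h1, ← h2, LinearEquiv.coe_coe, LinearEquiv.symm_apply_apply]
    rfl
  have hLrange : ∀ z, L z ∈ LinearMap.range Q' := by
    intro z
    apply him
    have : ((LinearMap.ker P').liftQ R' hker) ((e.symm : _ →ₗ[ℝ] _) (π z)) ∈
        LinearMap.range ((LinearMap.ker P').liftQ R' hker) := LinearMap.mem_range_self _ _
    rw [Submodule.range_liftQ] at this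
    exact this
  obtain ⟨h, hh⟩ := Module.projective_lifting_property Q'.rangeRestrict
    (L.codRestrict (LinearMap.range Q') hLrange) Q'.surjective_rangeRestrict
  have hQh : ∀ z, Q' (h z) = L z := by
    intro z
    have := congrArg Subtype.val (congrFun (congrArg DFunLike.coe hh) z)
    simpa using this
  refine ⟨LinearMap.toMatrix' h, ?_⟩
  apply mulVecLin_inj
  rw [Matrix.mulVecLin_mul, Matrix.mulVecLin_mul]
  ext v
  have : (LinearMap.toMatrix' h).mulVecLin = h := by
    rw [← Matrix.toLin'_apply', Matrix.toLin'_toMatrix']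
  simp only [LinearMap.comp_apply, this]
  rw [hQh, hLP]

/-- Membership in the affine set, via vectors. -/
lemma mem_A_iff {n r l : ℕ} {P : Matrix (Fin n) (Fin r) ℝ} {Q : Matrix (Fin l) (Fin n) ℝ}
    {R : Matrix (Fin l) (Fin r) ℝ} {A : Matrix (Fin n) (Fin n) ℝ} :
    R = Q * A * P ↔ ∀ v, Q *ᵥ (A *ᵥ (P *ᵥ v)) = R *ᵥ v := by
  constructor
  · intro h v; rw [h]; simp [← Matrix.mulVec_mulVec]
  · intro h
    symm
    apply mulVecLin_inj
    apply LinearMap.ext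
    intro v
    simp only [Matrix.mulVecLin_apply, ← Matrix.mulVec_mulVec]
    exact h v

/-- Rank-one update matrix. -/
noncomputable def rk1 {n : ℕ} (f : (Fin n → ℝ) →ₗ[ℝ] ℝ) (a : Fin n → ℝ) :
    Matrix (Fin n) (Fin n) ℝ := LinearMap.toMatrix' (f.smulRight a)

lemma rk1_mulVec {n : ℕ} (f : (Fin n → ℝ) →ₗ[ℝ] ℝ) (a : Fin n → ℝ) (z : Fin n → ℝ) :
    rk1 f a *ᵥ z = f z • a := by
  have : (rk1 f a).mulVecLin = f.smulRight a := by
    rw [rk1, ← Matrix.toLin'_apply', Matrix.toLin'_toMatrix']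
  have := congrFun (congrArg DFunLike.coe this) z
  simpa [Matrix.mulVecLin_apply] using this

lemma rank_eq_iff_ker {K : Type*} [Field K] {m : Type*} [Fintype m] {b : ℕ}
    (M : Matrix m (Fin b) K) :
    M.rank = b ↔ LinearMap.ker M.mulVecLin = ⊥ := by
  have h := rank_add_finrank_ker M
  rw [← Submodule.finrank_eq_zero (R := K)]
  omega

lemma fromRows_mulVec_eq_zero {a b c : ℕ} {M : Matrix (Fin a) (Fin c) ℂ}
    {N : Matrix (Fin b) (Fin c) ℂ} {v : Fin c → ℂ} :
    fromRows M N *ᵥ v = 0 ↔ M *ᵥ v = 0 ∧ N *ᵥ v = 0 := by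
  rw [Matrix.fromRows_mulVec]
  constructor
  · intro h
    constructor
    · funext i; exact congrFun h (Sum.inl i)
    · funext i; exact congrFun h (Sum.inr i)
  · rintro ⟨h1, h2⟩
    funext i
    cases i with
    | inl i => exact congrFun h1 i
    | inr i => exact congrFun h2 i

/-- Hautus-type reformulation of a full-column-rank condition for stacked matrices. -/
lemma hautus_iff {n p : ℕ} (A : Matrix (Fin n) (Fin n) ℝ) (C : Matrix (Fin p) (Fin n) ℝ)
    (lam : ℂ) :
    (fromRows (cx A - lam • 1) (cx C)).rank = n ↔
      ∀ w : Fin n → ℂ, cx A *ᵥ w = lam • w → cx C *ᵥ w = 0 → w = 0 := by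
  rw [rank_eq_iff_ker, Submodule.eq_bot_iff]
  constructor
  · intro h w h1 h2
    apply h
    rw [LinearMap.mem_ker, Matrix.mulVecLin_apply, fromRows_mulVec_eq_zero]
    refine ⟨?_, h2⟩
    rw [Matrix.sub_mulVec, Matrix.smul_mulVec, Matrix.one_mulVec, h1, sub_self]
  · intro h w hw
    rw [LinearMap.mem_ker, Matrix.mulVecLin_apply, fromRows_mulVec_eq_zero] at hw
    obtain ⟨h1, h2⟩ := hw
    rw [Matrix.sub_mulVec, Matrix.smul_mulVec, Matrix.one_mulVec, sub_eq_zero] at h1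
    exact h w h1 h2

section Main

variable {n r l p : ℕ} {P : Matrix (Fin n) (Fin r) ℝ} {Q : Matrix (Fin l) (Fin n) ℝ}
  {R : Matrix (Fin l) (Fin r) ℝ} {C : Matrix (Fin p) (Fin n) ℝ}

lemma stacked_mem {lam : ℂ} {v : Fin r → ℂ} :
    v ∈ LinearMap.ker (fromRows (cx R - lam • (cx Q * cx P)) (cx C * cx P)).mulVecLin ↔
      cx R *ᵥ v = lam • (cx Q *ᵥ (cx P *ᵥ v)) ∧ cx C *ᵥ (cx P *ᵥ v) = 0 := by
  rw [LinearMap.mem_ker, Matrix.mulVecLin_apply, fromRows_mulVec_eq_zero,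
    Matrix.sub_mulVec, Matrix.smul_mulVec, sub_eq_zero,
    ← Matrix.mulVec_mulVec, ← Matrix.mulVec_mulVec]

lemma kerP_le_stacked (hker : LinearMap.ker P.mulVecLin ≤ LinearMap.ker R.mulVecLin) (lam : ℂ) :
    LinearMap.ker (cx P).mulVecLin ≤
      LinearMap.ker (fromRows (cx R - lam • (cx Q * cx P)) (cx C * cx P)).mulVecLin := by
  intro v hv
  rw [LinearMap.mem_ker, Matrix.mulVecLin_apply] at hv
  have hR : cx R *ᵥ v = 0 := by
    obtain ⟨h1, h2⟩ := cx_mulVec_eq_zero.1 hv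
    refine cx_mulVec_eq_zero.2 ⟨?_, ?_⟩
    · have := hker (show reV v ∈ LinearMap.ker P.mulVecLin by
        rwa [LinearMap.mem_ker, Matrix.mulVecLin_apply])
      rwa [LinearMap.mem_ker, Matrix.mulVecLin_apply] at this
    · have := hker (show imV v ∈ LinearMap.ker P.mulVecLin by
        rwa [LinearMap.mem_ker, Matrix.mulVecLin_apply])
      rwa [LinearMap.mem_ker, Matrix.mulVecLin_apply] at this
  rw [stacked_mem, hv, hR]
  simp [Matrix.mulVec_zero]

lemma rank_stacked_iff (hker : LinearMap.ker P.mulVecLin ≤ LinearMap.ker R.mulVecLin) (lam : ℂ) :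
    (fromRows (cx R - lam • (cx Q * cx P)) (cx C * cx P)).rank = P.rank ↔
      LinearMap.ker (fromRows (cx R - lam • (cx Q * cx P)) (cx C * cx P)).mulVecLin =
        LinearMap.ker (cx P).mulVecLin := by
  have h1 := rank_add_finrank_ker (fromRows (cx R - lam • (cx Q * cx P)) (cx C * cx P))
  have h2 := rank_add_finrank_ker (cx P)
  have h3 := rank_cx P
  constructor
  · intro h
    symm
    apply Submodule.eq_of_le_of_finrank_le (kerP_le_stacked hker lam)
    omega
  · intro h
    rw [h] at h1
    omega

lemma main (him : LinearMap.range R.mulVecLin ≤ LinearMap.range Q.mulVecLin)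
    (hker : LinearMap.ker P.mulVecLin ≤ LinearMap.ker R.mulVecLin)
    (S : Set ℂ) (h1S : (1 : ℂ) ∈ S) :
    (∀ A : Matrix (Fin n) (Fin n) ℝ, R = Q * A * P → ∀ lam ∈ S,
        (fromRows (cx A - lam • 1) (cx C)).rank = n) ↔
      (LinearMap.ker C.mulVecLin ≤ LinearMap.range P.mulVecLin ∧
        ∀ lam ∈ S,
          (fromRows (cx R - lam • (cx Q * cx P)) (cx C * cx P)).rank = P.rank) := by
  obtain ⟨A₀, hA₀⟩ := exists_A0 P Q R him hker
  constructor
  · intro H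
    have H' : ∀ A : Matrix (Fin n) (Fin n) ℝ, R = Q * A * P → ∀ lam ∈ S,
        ∀ w : Fin n → ℂ, cx A *ᵥ w = lam • w → cx C *ᵥ w = 0 → w = 0 :=
      fun A hA lam hl => (hautus_iff A C lam).1 (H A hA lam hl)
    constructor
    · -- ker C ≤ range P
      intro x hxC
      by_contra hxP
      rw [LinearMap.mem_ker, Matrix.mulVecLin_apply] at hxC
      obtain ⟨f, hfx, hf0⟩ := exists_functional _ hxP
      set a : Fin n → ℝ := x - A₀ *ᵥ x with ha
      set A : Matrix (Fin n) (Fin n) ℝ := A₀ + rk1 f a with hAdef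
      have hA : R = Q * A * P := by
        rw [mem_A_iff]
        intro v
        rw [hAdef, Matrix.add_mulVec, rk1_mulVec,
          hf0 _ ⟨v, Matrix.mulVecLin_apply _ _⟩, zero_smul, add_zero]
        exact mem_A_iff.1 hA₀ v
      have hAx : A *ᵥ x = x := by
        rw [hAdef, Matrix.add_mulVec, rk1_mulVec, hfx, one_smul, ha, add_sub_cancel]
      have hx0 : cxv x = 0 :=
        H' A hA 1 h1S (cxv x) (by rw [cx_mulVec, hAx, one_smul]) (by
          rw [cx_mulVec, hxC, ← cxv_eq_zero.2 (rfl : (0 : Fin p → ℝ) = 0)])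
      exact hxP (by rw [cxv_eq_zero.1 hx0]; exact zero_mem _)
    · intro lam hlam
      rw [rank_stacked_iff hker lam]
      apply le_antisymm _ (kerP_le_stacked hker lam)
      intro v hv
      rw [LinearMap.mem_ker, Matrix.mulVecLin_apply]
      by_contra hx
      obtain ⟨hv1, hv2⟩ := stacked_mem.1 hv
      set x : Fin n → ℂ := cx P *ᵥ v with hxdef
      have hQu : cx Q *ᵥ (cx A₀ *ᵥ x - lam • x) = 0 := by
        have hqa : cx Q *ᵥ (cx A₀ *ᵥ x) = cx R *ᵥ v := by
          rw [hxdef, Matrix.mulVec_mulVec, Matrix.mulVec_mulVec, hA₀, cx_mul, cx_mul,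
            Matrix.mul_assoc]
        rw [Matrix.mulVec_sub, Matrix.mulVec_smul, hqa, hv1, sub_self]
      set x₁ : Fin n → ℝ := reV x with hx1def
      set x₂ : Fin n → ℝ := imV x with hx2def
      by_cases hdep : ∃ c d : ℝ, (c ≠ 0 ∨ d ≠ 0) ∧ c • x₁ + d • x₂ = 0
      · -- degenerate (ℝ-dependent real and imaginary parts) case
        obtain ⟨c, d, hcd, hsum⟩ := hdep
        obtain ⟨y, e, hy, he, hxe⟩ : ∃ (y : Fin n → ℝ) (e : ℂ), y ≠ 0 ∧ e ≠ 0 ∧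
            x = e • cxv y := by
          by_cases hd : d = 0
          · have hc : c ≠ 0 := by tauto
            have hx1 : x₁ = 0 := by
              have h0 : c • x₁ = 0 := by
                have := hsum; rw [hd, zero_smul, add_zero] at this; exact this
              exact (smul_eq_zero.1 h0).resolve_left hc
            have hxeq : x = Complex.I • cxv x₂ := by
              rw [decomp x, ← hx1def, ← hx2def, hx1, cxv_eq_zero.2 rfl, zero_add]
            refine ⟨x₂, Complex.I, ?_, Complex.I_ne_zero, hxeq⟩
            intro h2
            exact hx (by rw [hxeq, h2, cxv_eq_zero.2 rfl, smul_zero])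
          · have hx2 : x₂ = (-(c/d)) • x₁ := by
              funext i
              have := congrFun hsum i
              simp only [Pi.add_apply, Pi.smul_apply, smul_eq_mul, Pi.zero_apply] at this
              simp only [Pi.smul_apply, smul_eq_mul]
              field_simp
              linarith
            have hxeq : x = (1 + ((-(c/d) : ℝ) : ℂ) * Complex.I) • cxv x₁ := by
              rw [decomp x, ← hx1def, ← hx2def, hx2, cxv_smul, smul_smul, add_smul, one_smul,
                mul_comm]
            refine ⟨x₁, 1 + ((-(c/d) : ℝ) : ℂ) * Complex.I, ?_, ?_, hxeq⟩
            · intro h1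
              apply hx
              rw [hxeq, h1, cxv_eq_zero.2 rfl, smul_zero]
            · intro h0
              have := congrArg Complex.re h0
              simp at this
        have hCy : C *ᵥ y = 0 := by
          have h2 := hv2
          rw [hxe, Matrix.mulVec_smul, cx_mulVec] at h2
          exact cxv_eq_zero.1 ((smul_eq_zero.1 h2).resolve_left he)
        have hQ2 : cxv (Q *ᵥ (A₀ *ᵥ y)) = lam • cxv (Q *ᵥ y) := by
          have h3 := hQu
          rw [hxe, Matrix.mulVec_smul, smul_comm lam e, ← smul_sub, Matrix.mulVec_smul] at h3
          have h4 := (smul_eq_zero.1 h3).resolve_left he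
          rw [Matrix.mulVec_sub, Matrix.mulVec_smul, cx_mulVec, cx_mulVec, cx_mulVec,
            sub_eq_zero] at h4
          exact h4
        obtain ⟨lam₀, hlam₀S, hQa⟩ : ∃ lam₀ : ℝ, ((lam₀ : ℂ) ∈ S) ∧
            Q *ᵥ (lam₀ • y - A₀ *ᵥ y) = 0 := by
          by_cases him0 : lam.im = 0
          · have hre : ((lam.re : ℝ) : ℂ) = lam := Complex.ext rfl (by simp [him0])
            refine ⟨lam.re, by rw [hre]; exact hlam, ?_⟩
            have : Q *ᵥ (A₀ *ᵥ y) = lam.re • (Q *ᵥ y) := by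
              apply cxv_inj
              rw [hQ2, cxv_smul, hre]
            rw [Matrix.mulVec_sub, Matrix.mulVec_smul, this, sub_self]
          · have hQy : Q *ᵥ y = 0 := by
              funext i
              have h5 := congrFun hQ2 i
              simp only [cxv_apply, Pi.smul_apply, smul_eq_mul] at h5
              have h6 := congrArg Complex.im h5
              simp only [Complex.ofReal_im, Complex.mul_im, Complex.ofReal_re] at h6
              have : lam.im * (Q *ᵥ y) i = 0 := by simpa using h6.symm
              simpa using (mul_eq_zero.1 this).resolve_left him0
            have hQA : Q *ᵥ (A₀ *ᵥ y) = 0 := by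
              apply cxv_inj
              rw [hQ2, hQy, cxv_eq_zero.2 rfl, smul_zero]
            refine ⟨1, by simpa using h1S, ?_⟩
            rw [Matrix.mulVec_sub, Matrix.mulVec_smul, hQy, hQA, smul_zero, sub_self]
        obtain ⟨g, hgy, -⟩ := exists_functional (⊥ : Submodule ℝ (Fin n → ℝ))
          (by simpa using hy)
        set a : Fin n → ℝ := lam₀ • y - A₀ *ᵥ y with hadef
        set A : Matrix (Fin n) (Fin n) ℝ := A₀ + rk1 g a with hAdef
        have hA : R = Q * A * P := by
          rw [mem_A_iff]
          intro v'
          rw [hAdef, Matrix.add_mulVec, rk1_mulVec, Matrix.mulVec_add, Matrix.mulVec_smul,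
            hQa, smul_zero, add_zero]
          exact mem_A_iff.1 hA₀ v'
        have hAy : A *ᵥ y = lam₀ • y := by
          rw [hAdef, Matrix.add_mulVec, rk1_mulVec, hgy, one_smul, hadef, add_sub_cancel]
        have := H' A hA _ hlam₀S (cxv y) (by rw [cx_mulVec, hAy, cxv_smul])
          (by rw [cx_mulVec, hCy, cxv_eq_zero.2 rfl])
        exact hy (cxv_eq_zero.1 this)
      · -- independent case
        push_neg at hdep
        have h1 : x₁ ∉ Submodule.span ℝ {x₂} := by
          intro h
          obtain ⟨t, ht⟩ := Submodule.mem_span_singleton.1 h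
          refine hdep 1 (-t) (Or.inl one_ne_zero) ?_
          rw [one_smul, neg_smul, ht]
          abel
        have h2 : x₂ ∉ Submodule.span ℝ {x₁} := by
          intro h
          obtain ⟨t, ht⟩ := Submodule.mem_span_singleton.1 h
          refine hdep (-t) 1 (Or.inr one_ne_zero) ?_
          rw [one_smul, neg_smul, ht]
          abel
        obtain ⟨g₁, hg11, hg10⟩ := exists_functional _ h1
        obtain ⟨g₂, hg22, hg20⟩ := exists_functional _ h2
        have hg12 : g₁ x₂ = 0 := hg10 x₂ (Submodule.mem_span_singleton_self x₂)
        have hg21 : g₂ x₁ = 0 := hg20 x₁ (Submodule.mem_span_singleton_self x₁)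
        set u : Fin n → ℂ := cx A₀ *ᵥ x - lam • x with hudef
        obtain ⟨hu1, hu2⟩ := cx_mulVec_eq_zero.1 hQu
        set Δ : Matrix (Fin n) (Fin n) ℝ := rk1 g₁ (-(reV u)) + rk1 g₂ (-(imV u)) with hΔdef
        have hΔ : ∀ z, Δ *ᵥ z = g₁ z • (-(reV u)) + g₂ z • (-(imV u)) := by
          intro z
          rw [hΔdef, Matrix.add_mulVec, rk1_mulVec, rk1_mulVec]
        set A : Matrix (Fin n) (Fin n) ℝ := A₀ + Δ with hAdef
        have hA : R = Q * A * P := by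
          rw [mem_A_iff]
          intro v'
          rw [hAdef, Matrix.add_mulVec, hΔ, Matrix.mulVec_add, Matrix.mulVec_add,
            Matrix.mulVec_smul, Matrix.mulVec_smul, Matrix.mulVec_neg, Matrix.mulVec_neg,
            hu1, hu2, neg_zero, smul_zero, smul_zero, add_zero, add_zero]
          exact mem_A_iff.1 hA₀ v'
        have hΔ1 : Δ *ᵥ x₁ = -(reV u) := by
          rw [hΔ, hg11, hg21, one_smul, zero_smul, add_zero]
        have hΔ2 : Δ *ᵥ x₂ = -(imV u) := by
          rw [hΔ, hg12, hg22, one_smul, zero_smul, zero_add]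
        have hΔx : cx Δ *ᵥ x = -u := by
          conv_lhs => rw [decomp x, ← hx1def, ← hx2def]
          rw [Matrix.mulVec_add, Matrix.mulVec_smul, cx_mulVec, cx_mulVec, hΔ1, hΔ2,
            show -(reV u) = (-1 : ℝ) • reV u by funext i; simp,
            show -(imV u) = (-1 : ℝ) • imV u by funext i; simp,
            cxv_smul, cxv_smul]
          conv_rhs => rw [decomp u]
          push_cast
          module
        have hAx : cx A *ᵥ x = lam • x := by
          rw [hAdef, cx_add, Matrix.add_mulVec, hΔx, hudef]
          abel
        have := H' A hA lam hlam x hAx hv2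
        exact hx this
  · rintro ⟨hC, hrk⟩ A hA lam hlam
    rw [hautus_iff]
    intro w hw1 hw2
    have hre : reV w ∈ LinearMap.ker C.mulVecLin := by
      rw [LinearMap.mem_ker, Matrix.mulVecLin_apply, ← reV_mulVec, hw2]
      exact reV_zero
    have him' : imV w ∈ LinearMap.ker C.mulVecLin := by
      rw [LinearMap.mem_ker, Matrix.mulVecLin_apply, ← imV_mulVec, hw2]
      exact imV_zero
    obtain ⟨p₁, hp₁⟩ := hC hre
    obtain ⟨p₂, hp₂⟩ := hC him'
    rw [Matrix.mulVecLin_apply] at hp₁ hp₂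
    set v : Fin r → ℂ := cxv p₁ + Complex.I • cxv p₂ with hvdef
    have hPv : cx P *ᵥ v = w := by
      rw [hvdef, Matrix.mulVec_add, Matrix.mulVec_smul, cx_mulVec, cx_mulVec, hp₁, hp₂,
        ← decomp]
    have hkerEq := (rank_stacked_iff hker lam).1 (hrk lam hlam)
    have hvmem : v ∈ LinearMap.ker
        (fromRows (cx R - lam • (cx Q * cx P)) (cx C * cx P)).mulVecLin := by
      rw [stacked_mem, hPv]
      constructor
      · rw [hA, cx_mul, cx_mul, Matrix.mul_assoc, ← Matrix.mulVec_mulVec,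
          ← Matrix.mulVec_mulVec, hPv, hw1, Matrix.mulVec_smul]
      · rw [hw2]
    rw [hkerEq, LinearMap.mem_ker, Matrix.mulVecLin_apply, hPv] at hvmem
    exact hvmem

end Main

end UniformHautus

open UniformHautus in
/-- uniform Hautus test for observability / detectability of (C,A)
over the affine set 𝒜 = { A : R = Q A P }. -/
theorem uniform_hautus_observability_detectability (n r l p : ℕ)
    (P : Matrix (Fin n) (Fin r) ℝ) (Q : Matrix (Fin l) (Fin n) ℝ)
    (R : Matrix (Fin l) (Fin r) ℝ) (C : Matrix (Fin p) (Fin n) ℝ)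
    (him : LinearMap.range R.mulVecLin ≤ LinearMap.range Q.mulVecLin)
    (hker : LinearMap.ker P.mulVecLin ≤ LinearMap.ker R.mulVecLin) :
    ((∀ A : Matrix (Fin n) (Fin n) ℝ, R = Q * A * P → ∀ lam : ℂ,
        (fromRows (cx A - lam • 1) (cx C)).rank = n) ↔
      (LinearMap.ker C.mulVecLin ≤ LinearMap.range P.mulVecLin ∧
        ∀ lam : ℂ,
          (fromRows (cx R - lam • (cx Q * cx P)) (cx C * cx P)).rank = P.rank))
    ∧
    ((∀ A : Matrix (Fin n) (Fin n) ℝ, R = Q * A * P → ∀ lam : ℂ, 1 ≤ ‖lam‖ →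
        (fromRows (cx A - lam • 1) (cx C)).rank = n) ↔
      (LinearMap.ker C.mulVecLin ≤ LinearMap.range P.mulVecLin ∧
        ∀ lam : ℂ, 1 ≤ ‖lam‖ →
          (fromRows (cx R - lam • (cx Q * cx P)) (cx C * cx P)).rank = P.rank)) := by
  constructor
  · have h := UniformHautus.main (P := P) (Q := Q) (R := R) (C := C) him hker
      Set.univ (Set.mem_univ 1)
    simpa only [Set.mem_univ, forall_const, true_implies] using h
  · have h1 : (1 : ℂ) ∈ {lam : ℂ | 1 ≤ ‖lam‖} := by simp
    have h := UniformHautus.main (P := P) (Q := Q) (R := R) (C := C) him hker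
      {lam : ℂ | 1 ≤ ‖lam‖} h1
    simpa only [Set.mem_setOf_eq] using h
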